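/- (Boundedness below of the WMMSE objective.) On the feasible set {u_{l,k} ∈ ℝ, w_{l,k} > 0, 0 ≤ ρ̂_{l,k} ≤ √P, 0 ≤ ρ_{l,k} ≤ √P for all l,k}, the objective F(u,w,ρ̂,ρ) is bounded below; specifically F(u,w,ρ̂,ρ) ≥ L·K − Σ_{l=1}^L Σ_{k=1}^K ln(1 + M K P² (β_{l,k}^l)² / σ⁴). -/

import Mathlib

open Finset

/-- Interference-plus-noise term `D_{l,k}(p, p̂)`.
`β l i t` denotes `β_{i,t}^l` (large-scale fading from user `t` in cell `i` to BS `l`). -/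
noncomputable def Dterm (L K M : ℕ) (β : Fin L → Fin L → Fin K → ℝ) (σ2 : ℝ)
    (p phat : Fin L → Fin K → ℝ) (l : Fin L) (k : Fin K) : ℝ :=
  (M : ℝ) * K * ∑ i ∈ Finset.univ.erase l, p i k * phat i k * β l i k ^ 2
    + ((K : ℝ) * ∑ i, phat i k * β l i k + σ2) * ((∑ i, ∑ t, p i t * β l i t) + σ2)

/-- Effective SINR of user `k` in cell `l`. -/
noncomputable def SINR (L K M : ℕ) (β : Fin L → Fin L → Fin K → ℝ) (σ2 : ℝ)
    (p phat : Fin L → Fin K → ℝ) (l : Fin L) (k : Fin K) : ℝ :=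
  (M : ℝ) * K * p l k * phat l k * β l l k ^ 2 / Dterm L K M β σ2 p phat l k

/-- Mean square error `e_{l,k}(u, ρ̂, ρ)` of the auxiliary SISO system. -/
noncomputable def eMSE (L K M : ℕ) (β : Fin L → Fin L → Fin K → ℝ) (σ2 : ℝ)
    (u ρhat ρ : Fin L → Fin K → ℝ) (l : Fin L) (k : Fin K) : ℝ :=
  (M : ℝ) * K * u l k ^ 2 * ∑ i, ρ i k ^ 2 * ρhat i k ^ 2 * β l i k ^ 2
    - 2 * Real.sqrt ((M : ℝ) * K) * ρ l k * ρhat l k * u l k * β l l k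
    + u l k ^ 2 * ((K : ℝ) * ∑ i, ρhat i k ^ 2 * β l i k + σ2)
        * ((∑ i, ∑ t, ρ i t ^ 2 * β l i t) + σ2) + 1

/-- The quantity `ũ_{l,k}(ρ̂, ρ)`. -/
noncomputable def utilde (L K M : ℕ) (β : Fin L → Fin L → Fin K → ℝ) (σ2 : ℝ)
    (ρhat ρ : Fin L → Fin K → ℝ) (l : Fin L) (k : Fin K) : ℝ :=
  (M : ℝ) * K * ∑ i, ρ i k ^ 2 * ρhat i k ^ 2 * β l i k ^ 2
    + ((K : ℝ) * ∑ i, ρhat i k ^ 2 * β l i k + σ2)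
        * ((∑ i, ∑ t, ρ i t ^ 2 * β l i t) + σ2)

/-- The weighted-MMSE objective `F(u, w, ρ̂, ρ) = Σ_{l,k} (w_{l,k} e_{l,k} − ln w_{l,k})`. -/
noncomputable def Fobj (L K M : ℕ) (β : Fin L → Fin L → Fin K → ℝ) (σ2 : ℝ)
    (u w ρhat ρ : Fin L → Fin K → ℝ) : ℝ :=
  ∑ l, ∑ k, (w l k * eMSE L K M β σ2 u ρhat ρ l k - Real.log (w l k))

/-- Update the `(l,k)` entry of a doubly-indexed vector to the value `x`. -/
noncomputable def updLK {L K : ℕ} (f : Fin L → Fin K → ℝ) (l : Fin L) (k : Fin K)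
    (x : ℝ) : Fin L → Fin K → ℝ :=
  Function.update f l (Function.update (f l) k x)

set_option maxHeartbeats 2000000 in
/-- on the feasible set, the WMMSE objective is bounded below by
`LK − Σ_{l,k} ln(1 + MK P² (β_{l,k}^l)² / σ⁴)`. -/
theorem stmt_14 (L K M : ℕ) (hL : 0 < L) (hK : 0 < K) (hM : 0 < M)
    (β : Fin L → Fin L → Fin K → ℝ) (hβ : ∀ l i t, 0 < β l i t)
    (σ2 : ℝ) (hσ : 0 < σ2) (P : ℝ) (hP : 0 < P)
    (u w ρhat ρ : Fin L → Fin K → ℝ)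
    (hw : ∀ l k, 0 < w l k)
    (hρhat : ∀ l k, ρhat l k ∈ Set.Icc 0 (Real.sqrt P))
    (hρ : ∀ l k, ρ l k ∈ Set.Icc 0 (Real.sqrt P)) :
    (L : ℝ) * K - (∑ l, ∑ k, Real.log (1 +
        (M : ℝ) * K * P ^ 2 * β l l k ^ 2 / σ2 ^ 2)) ≤
      Fobj L K M β σ2 u w ρhat ρ := by
  have hMK : (0:ℝ) < (M:ℝ) * K := by positivity
  have key : ∀ l k, 1 - Real.log (1 + (M : ℝ) * K * P ^ 2 * β l l k ^ 2 / σ2 ^ 2) ≤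
      w l k * eMSE L K M β σ2 u ρhat ρ l k - Real.log (w l k) := by
    intro l k
    obtain ⟨X, hXdef⟩ : ∃ X, X = (M : ℝ) * K * P ^ 2 * β l l k ^ 2 / σ2 ^ 2 := ⟨_, rfl⟩
    rw [← hXdef]
    have hXpos : 0 ≤ X := by rw [hXdef]; positivity
    obtain ⟨a, hadef⟩ : ∃ a, a = utilde L K M β σ2 ρhat ρ l k := ⟨_, rfl⟩
    obtain ⟨b, hbdef⟩ : ∃ b, b = Real.sqrt ((M : ℝ) * K) * ρ l k * ρhat l k * β l l k := ⟨_, rfl⟩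
    have hsq : Real.sqrt ((M : ℝ) * K) ^ 2 = (M : ℝ) * K :=
      Real.sq_sqrt hMK.le
    have he : eMSE L K M β σ2 u ρhat ρ l k = a * u l k ^ 2 - 2 * b * u l k + 1 := by
      rw [hadef, hbdef]; simp only [eMSE, utilde]; ring
    have hbsq : b ^ 2 = (M : ℝ) * K * (ρ l k ^ 2 * ρhat l k ^ 2 * β l l k ^ 2) := by
      rw [hbdef]; nlinarith [hsq]
    -- bounds on squares
    have hρ2 : ∀ i t, ρ i t ^ 2 ≤ P := by
      intro i t
      have h := hρ i t
      nlinarith [Real.sq_sqrt hP.le, h.1, h.2]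
    have hρhat2 : ∀ i t, ρhat i t ^ 2 ≤ P := by
      intro i t
      have h := hρhat i t
      nlinarith [Real.sq_sqrt hP.le, h.1, h.2]
    -- b² ≤ X σ2²
    have hb2 : b ^ 2 ≤ X * σ2 ^ 2 := by
      have hX2 : X * σ2 ^ 2 = (M : ℝ) * K * (P * P * β l l k ^ 2) := by
        rw [hXdef]; field_simp
      rw [hX2, hbsq]
      apply mul_le_mul_of_nonneg_left _ hMK.le
      apply mul_le_mul_of_nonneg_right _ (sq_nonneg _)
      exact mul_le_mul (hρ2 l k) (hρhat2 l k) (sq_nonneg _) hP.le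
    -- a ≥ b² + σ2²
    have hsum1 : (M : ℝ) * K * (ρ l k ^ 2 * ρhat l k ^ 2 * β l l k ^ 2) ≤
        (M : ℝ) * K * ∑ i, ρ i k ^ 2 * ρhat i k ^ 2 * β l i k ^ 2 := by
      apply mul_le_mul_of_nonneg_left _ hMK.le
      exact Finset.single_le_sum (f := fun i => ρ i k ^ 2 * ρhat i k ^ 2 * β l i k ^ 2)
        (fun i _ => by positivity) (Finset.mem_univ l)
    have hfac1 : σ2 ≤ (K : ℝ) * ∑ i, ρhat i k ^ 2 * β l i k + σ2 := by
      have : (0:ℝ) ≤ (K : ℝ) * ∑ i, ρhat i k ^ 2 * β l i k := by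
        apply mul_nonneg (by positivity)
        exact Finset.sum_nonneg fun i _ => mul_nonneg (sq_nonneg _) (hβ l i k).le
      linarith
    have hfac2 : σ2 ≤ (∑ i, ∑ t, ρ i t ^ 2 * β l i t) + σ2 := by
      have : (0:ℝ) ≤ ∑ i, ∑ t, ρ i t ^ 2 * β l i t :=
        Finset.sum_nonneg fun i _ =>
          Finset.sum_nonneg fun t _ => mul_nonneg (sq_nonneg _) (hβ l i t).le
      linarith
    have hab : b ^ 2 + σ2 ^ 2 ≤ a := by
      have h2 : σ2 ^ 2 ≤ ((K : ℝ) * ∑ i, ρhat i k ^ 2 * β l i k + σ2)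
          * ((∑ i, ∑ t, ρ i t ^ 2 * β l i t) + σ2) := by
        nlinarith [hfac1, hfac2, hσ]
      rw [hadef, utilde, hbsq]
      linarith
    have hapos : 0 < a := by nlinarith [sq_nonneg b, sq_nonneg σ2, hσ]
    -- key inequality: e (1+X) ≥ 1
    have hcpos : (0:ℝ) < 1 + X := by linarith
    have hec : 1 ≤ eMSE L K M β σ2 u ρhat ρ l k * (1 + X) := by
      have hid : a * (eMSE L K M β σ2 u ρhat ρ l k * (1 + X)) - a * 1 =
          (1 + X) * (a * u l k - b) ^ 2 + (X * (a - b ^ 2) - b ^ 2) := by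
        rw [he]; ring
      have f1 : 0 ≤ (1 + X) * (a * u l k - b) ^ 2 :=
        mul_nonneg hcpos.le (sq_nonneg _)
      have f2 : X * σ2 ^ 2 ≤ X * (a - b ^ 2) :=
        mul_le_mul_of_nonneg_left (by linarith) hXpos
      have hmul : a * 1 ≤ a * (eMSE L K M β σ2 u ρhat ρ l k * (1 + X)) := by
        linarith
      exact le_of_mul_le_mul_left hmul hapos
    have hepos : 0 < eMSE L K M β σ2 u ρhat ρ l k := by
      nlinarith [hec, hcpos]
    -- log bound
    have hloge : -Real.log (1 + X) ≤ Real.log (eMSE L K M β σ2 u ρhat ρ l k) := by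
      have h := Real.log_nonneg hec
      rw [Real.log_mul hepos.ne' hcpos.ne'] at h
      linarith
    -- w e − log w ≥ 1 + log e
    have hwe : 1 + Real.log (eMSE L K M β σ2 u ρhat ρ l k) ≤
        w l k * eMSE L K M β σ2 u ρhat ρ l k - Real.log (w l k) := by
      have h1 := Real.log_le_sub_one_of_pos (mul_pos (hw l k) hepos)
      rw [Real.log_mul (hw l k).ne' hepos.ne'] at h1
      linarith
    linarith
  have hsum : ∑ l, ∑ k, (1 - Real.log (1 + (M : ℝ) * K * P ^ 2 * β l l k ^ 2 / σ2 ^ 2)) ≤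
      Fobj L K M β σ2 u w ρhat ρ := by
    apply Finset.sum_le_sum; intro l _
    apply Finset.sum_le_sum; intro k _
    exact key l k
  have heq : ∑ l, ∑ k, ((1:ℝ) - Real.log (1 + (M : ℝ) * K * P ^ 2 * β l l k ^ 2 / σ2 ^ 2))
      = (L : ℝ) * K - (∑ l, ∑ k, Real.log (1 +
        (M : ℝ) * K * P ^ 2 * β l l k ^ 2 / σ2 ^ 2)) := by
    rw [Finset.sum_congr rfl (fun l _ => Finset.sum_sub_distrib _ _), Finset.sum_sub_distrib]
    simp [mul_comm]
  linarith [hsum, heq.ge, heq.le]
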